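/- With notation as above (recurrence of minimal order M over a field k', q(X) = 1 − r_1X − ⋯ − r_M X^M, numerators p_t), the polynomials p_t(X) and q(X) are relatively prime in k'[X]: if α were a common root of p_{t_0} and q in an algebraic closure, then p_t(α) = 0 for all t ≥ t_0, forcing the columns of the nonsingular Hankel matrix C_{t_0} to be linearly dependent, a contradiction. -/

import Mathlib

open Polynomial Finset

section Aux
variable {k' : Type*} [Field k'] (M : ℕ) (r : ℕ → k') (c : ℤ → k')

noncomputable def pp (t : ℤ) : Polynomial k' :=
  ∑ j ∈ Finset.range M,
    C (c (t + j) - ∑ i ∈ Finset.range j, r (i + 1) * c (t + j - (i + 1))) * X ^ j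

noncomputable def qq : Polynomial k' :=
  1 - ∑ i ∈ Finset.range M, C (r (i + 1)) * X ^ (i + 1)

lemma coeff_pp (t : ℤ) (n : ℕ) :
    (pp M r c t).coeff n =
      if n < M then c (t + n) - ∑ i ∈ Finset.range n, r (i + 1) * c (t + n - (i + 1)) else 0 := by
  rw [pp, finset_sum_coeff]
  simp only [coeff_C_mul, coeff_X_pow, mul_ite, mul_one, mul_zero]
  rw [Finset.sum_ite_eq (Finset.range M)]
  simp [Finset.mem_range]

lemma coeff_qq (n : ℕ) :
    (qq M r : Polynomial k').coeff n =
      (if n = 0 then 1 else 0) - (if 1 ≤ n ∧ n ≤ M then r n else 0) := by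
  rw [qq]
  rw [coeff_sub, finset_sum_coeff]
  simp only [coeff_C_mul, coeff_X_pow, mul_ite, mul_one, mul_zero, coeff_one]
  congr 1
  rcases n with _ | m
  · simp
  · rw [show (∑ i ∈ Finset.range M, if m + 1 = i + 1 then r (i+1) else 0)
        = ∑ i ∈ Finset.range M, if i = m then r (i+1) else 0 by
      apply Finset.sum_congr rfl; intro i _; simp [eq_comm, Nat.succ_inj]]
    rw [Finset.sum_ite_eq' (Finset.range M)]
    simp only [Finset.mem_range]
    congr 1
    simp only [eq_iff_iff]
    omega

lemma key (hM : 0 < M)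
    (hrec : ∀ n : ℤ, c n = ∑ i ∈ Finset.range M, r (i + 1) * c (n - (i + 1)))
    (t : ℤ) :
    pp M r c t = C (c t) * qq M r + X * pp M r c (t + 1) := by
  ext n
  rw [coeff_add, coeff_C_mul, coeff_qq, coeff_pp]
  rcases n with _ | m
  · simp [coeff_pp, hM]
  · rw [coeff_X_mul, coeff_pp]
    rw [if_neg (Nat.succ_ne_zero m)]
    rcases lt_trichotomy (m + 1) M with h | h | h
    · rw [if_pos h, if_pos (show 1 ≤ m + 1 ∧ m + 1 ≤ M by omega), if_pos (by omega : m < M)]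
      rw [Finset.sum_range_succ]
      push_cast
      rw [show t + (↑m + 1) - (↑m + 1) = t by ring]
      rw [show t + 1 + (m:ℤ) = t + (↑m + 1) by ring]
      ring
    · rw [if_neg (by omega), if_pos (show 1 ≤ m + 1 ∧ m + 1 ≤ M by omega),
        if_pos (by omega : m < M)]
      have h2 := hrec (t + M)
      rw [show M = (m + 1) from h.symm] at h2
      rw [Finset.sum_range_succ] at h2
      push_cast at h2
      rw [show t + (↑m + 1) - (↑m + 1) = t by ring] at h2
      rw [show t + 1 + (m:ℤ) = t + (↑m + 1) by ring]
      linear_combination -h2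
    · rw [if_neg (by omega), if_neg (by omega : ¬ (1 ≤ m + 1 ∧ m + 1 ≤ M)),
        if_neg (by omega : ¬ m < M)]
      ring

lemma dvd_pp_step (hM : 0 < M)
    (hrec : ∀ n : ℤ, c n = ∑ i ∈ Finset.range M, r (i + 1) * c (n - (i + 1)))
    {g : Polynomial k'} (hgq : g ∣ qq M r) (hgX : ¬ (X : Polynomial k') ∣ g)
    {t : ℤ} (hgp : g ∣ pp M r c t) : g ∣ pp M r c (t + 1) := by
  have hXg : IsCoprime (X : Polynomial k') g := (Polynomial.prime_X.coprime_iff_not_dvd).mpr hgX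
  have h1 : g ∣ X * pp M r c (t + 1) := by
    have := key M r c hM hrec t
    have : X * pp M r c (t + 1) = pp M r c t - C (c t) * qq M r := by
      rw [this]; ring
    rw [this]
    exact dvd_sub hgp (Dvd.dvd.mul_left hgq _)
  exact hXg.symm.dvd_of_dvd_mul_left h1

lemma detA (t : ℤ) (hminT : (Matrix.of fun i j : Fin M => c (t + i + j)).det ≠ 0) :
    (Matrix.of fun i j : Fin M =>
      c (t + i + j) - ∑ m ∈ Finset.range (j : ℕ), r (m + 1) * c (t + i + j - (m + 1))).det
      ≠ 0 := by
  set U : Matrix (Fin M) (Fin M) k' := Matrix.of fun k j =>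
    if (k : ℕ) = (j : ℕ) then 1
    else if (k : ℕ) < (j : ℕ) then -r ((j : ℕ) - (k : ℕ)) else 0 with hU
  have hprod : (Matrix.of fun i j : Fin M =>
      c (t + i + j) - ∑ m ∈ Finset.range (j : ℕ), r (m + 1) * c (t + i + j - (m + 1)))
      = (Matrix.of fun i j : Fin M => c (t + i + j)) * U := by
    ext i j
    rw [Matrix.mul_apply]
    simp only [Matrix.of_apply, hU]
    rw [Fin.sum_univ_eq_sum_range (fun k => c (t + i + (k:ℤ)) *
        (if k = (j : ℕ) then 1 else if k < (j : ℕ) then -r ((j : ℕ) - k) else 0)) M]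
    have hj : (j : ℕ) < M := j.isLt
    rw [Finset.range_eq_Ico (a := M), ← Finset.sum_Ico_consecutive _ (Nat.zero_le ((j:ℕ)+1)) hj,
      ← Finset.range_eq_Ico]
    have h2 : ∑ k ∈ Finset.Ico ((j:ℕ)+1) M, c (t + i + k) *
        (if k = (j : ℕ) then 1 else if k < (j : ℕ) then -r ((j : ℕ) - k) else 0) = 0 := by
      apply Finset.sum_eq_zero
      intro k hk
      rw [Finset.mem_Ico] at hk
      rw [if_neg (by omega), if_neg (by omega), mul_zero]
    rw [h2, add_zero, Finset.sum_range_succ, if_pos rfl, mul_one]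
    have h3 : ∑ k ∈ Finset.range (j:ℕ), c (t + i + k) *
        (if k = (j : ℕ) then 1 else if k < (j : ℕ) then -r ((j : ℕ) - k) else 0)
        = -∑ m ∈ Finset.range (j:ℕ), r (m + 1) * c (t + i + j - (m + 1)) := by
      rw [← Finset.sum_range_reflect (fun m => r (m + 1) * c (t + i + j - (m + 1))) (j:ℕ),
        ← Finset.sum_neg_distrib]
      apply Finset.sum_congr rfl
      intro k hk
      rw [Finset.mem_range] at hk
      rw [if_neg (by omega), if_pos (by omega)]
      rw [show (j:ℕ) - 1 - k + 1 = (j:ℕ) - k by omega]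
      rw [show t + i + j - (((((j:ℕ) - 1 - k) : ℕ) : ℤ) + 1) = t + i + k by omega]
      ring
    rw [h3]
    ring
  rw [hprod, Matrix.det_mul]
  have hUdet : U.det = 1 := by
    rw [Matrix.det_of_upperTriangular (by
      intro i j hij
      simp only [id] at hij
      rw [Fin.lt_def] at hij
      simp only [hU, Matrix.of_apply]
      rw [if_neg (by omega), if_neg (by omega)])]
    simp [hU]
  rw [hUdet, mul_one]
  exact hminT

end Aux

theorem numerator_denominator_coprime
    (k' : Type*) [Field k'] (M : ℕ) (hM : 0 < M) (r : ℕ → k') (hrM : r M ≠ 0)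
    (c : ℤ → k') (n₀ : ℤ)
    (hrec : ∀ n : ℤ, c n = ∑ i ∈ Finset.range M, r (i + 1) * c (n - (i + 1)))
    (hmin : ∀ n : ℤ, (Matrix.of fun i j : Fin M => c (n + i + j)).det ≠ 0) :
    ∀ t : ℤ, n₀ ≤ t →
      IsCoprime
        (∑ j ∈ Finset.range M,
          C (c (t + j) - ∑ i ∈ Finset.range j, r (i + 1) * c (t + j - (i + 1))) *
            X ^ j : Polynomial k')
        (1 - ∑ i ∈ Finset.range M, C (r (i + 1)) * X ^ (i + 1) : Polynomial k') := by
  intro t _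
  show IsCoprime (pp M r c t) (qq M r)
  -- qq has nonzero constant coefficient
  have hq0 : (qq M r : Polynomial k').coeff 0 = 1 := by
    rw [coeff_qq]; simp
  have hqne : (qq M r : Polynomial k') ≠ 0 := by
    intro h; rw [h] at hq0; simp at hq0
  apply EuclideanDomain.isCoprime_of_dvd
  · intro ⟨_, h⟩; exact hqne h
  · intro g hgu hg0 hgp hgq
    -- X does not divide g
    have hgX : ¬ (X : Polynomial k') ∣ g := by
      intro h
      have : (X : Polynomial k') ∣ qq M r := h.trans hgq
      rw [Polynomial.X_dvd_iff, hq0] at this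
      exact one_ne_zero this
    -- g divides all pp (t + n)
    have hall : ∀ n : ℕ, g ∣ pp M r c (t + n) := by
      intro n
      induction n with
      | zero => simpa using hgp
      | succ m ih =>
        have h2 := dvd_pp_step M r c hM hrec hgq hgX ih
        rwa [show t + (m : ℤ) + 1 = t + ((m + 1 : ℕ) : ℤ) by push_cast; ring] at h2
    -- the coefficient matrix
    set A : Matrix (Fin M) (Fin M) k' := Matrix.of fun i j : Fin M =>
      c (t + i + j) - ∑ m ∈ Finset.range (j : ℕ), r (m + 1) * c (t + i + j - (m + 1)) with hA
    have hdet : A.det ≠ 0 := detA M r c t (hmin t)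
    have hinv : A⁻¹ * A = 1 := Matrix.nonsing_inv_mul A (Ne.isUnit hdet)
    set z : Fin M := ⟨0, hM⟩ with hz
    -- the combination equals 1
    have hcomb : ∑ i : Fin M, C (A⁻¹ z i) * pp M r c (t + i) = 1 := by
      have hppA : ∀ i : Fin M, pp M r c (t + i) = ∑ j : Fin M, C (A i j) * X ^ (j : ℕ) := by
        intro i
        rw [pp, ← Fin.sum_univ_eq_sum_range (fun j => C (c (t + i + (j:ℤ)) -
          ∑ m ∈ Finset.range j, r (m + 1) * c (t + i + (j:ℤ) - (m + 1))) * X ^ j) M]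
        rfl
      calc ∑ i : Fin M, C (A⁻¹ z i) * pp M r c (t + i)
          = ∑ i : Fin M, ∑ j : Fin M, C (A⁻¹ z i * A i j) * X ^ (j : ℕ) := by
            apply Finset.sum_congr rfl; intro i _
            rw [hppA i, Finset.mul_sum]
            apply Finset.sum_congr rfl; intro j _
            rw [C_mul]; ring
        _ = ∑ j : Fin M, C (∑ i : Fin M, A⁻¹ z i * A i j) * X ^ (j : ℕ) := by
            rw [Finset.sum_comm]
            apply Finset.sum_congr rfl; intro j _
            rw [map_sum, Finset.sum_mul]
        _ = ∑ j : Fin M, C ((A⁻¹ * A) z j) * X ^ (j : ℕ) := by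
            apply Finset.sum_congr rfl; intro j _
            rw [Matrix.mul_apply]
        _ = ∑ j : Fin M, C ((1 : Matrix (Fin M) (Fin M) k') z j) * X ^ (j : ℕ) := by
            rw [hinv]
        _ = 1 := by
            simp only [Matrix.one_apply, apply_ite C, map_one, map_zero, ite_mul, one_mul,
              zero_mul]
            rw [Finset.sum_ite_eq]
            simp [hz]
    -- contradiction
    have hdvd1 : g ∣ (1 : Polynomial k') := by
      rw [← hcomb]
      exact Finset.dvd_sum fun i _ => (hall i).mul_left _
    exact hgu (isUnit_of_dvd_one hdvd1)
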